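/- Let A, B, C be finite-dimensional subspaces of ℓ² with C ⊆ A ∩ B such that (A ⊖ C) ⊥ (B ⊖ C), where A ⊖ C denotes the orthogonal complement of C within A. Then for every pair of linear isometries φ : A → A, ψ : B → B with φ(C) = C = ψ(C) and φ|_C = ψ|_C, there exists a linear isometry of the subspace spanned by A ∪ B extending both φ and ψ. -/

import Mathlib

open scoped RealInnerProductSpace

/-- Independence of orthogonal subspaces over a common subspace: if `A ⊖ C ⊥ B ⊖ C`,
then any pair of linear isometries of `A` and of `B` preserving `C` and agreeing on
`C` extends to a linear isometry of the span of `A ∪ B`. -/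
theorem orthogonal_independence {H : Type*} [NormedAddCommGroup H]
    [InnerProductSpace ℝ H] [CompleteSpace H] [TopologicalSpace.SeparableSpace H]
    (A B C : Submodule ℝ H)
    [FiniteDimensional ℝ A] [FiniteDimensional ℝ B] [FiniteDimensional ℝ C]
    (hC : C ≤ A ⊓ B)
    (horth : ∀ x ∈ A ⊓ Cᗮ, ∀ y ∈ B ⊓ Cᗮ, ⟪x, y⟫ = 0)
    (φ : A →ₗᵢ[ℝ] H) (hφA : ∀ x : A, φ x ∈ A)
    (hφC : ∀ x : A, (x : H) ∈ C → φ x ∈ C)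
    (ψ : B →ₗᵢ[ℝ] H) (hψB : ∀ x : B, ψ x ∈ B)
    (hψC : ∀ x : B, (x : H) ∈ C → ψ x ∈ C)
    (hagree : ∀ (x : A) (y : B), (x : H) = (y : H) → (x : H) ∈ C → φ x = ψ y) :
    ∃ χ : ↥(A ⊔ B) →ₗᵢ[ℝ] H,
      (∀ z : ↥(A ⊔ B), χ z ∈ A ⊔ B) ∧
      (∀ (x : A) (z : ↥(A ⊔ B)), (x : H) = (z : H) → χ z = φ x) ∧
      (∀ (y : B) (z : ↥(A ⊔ B)), (y : H) = (z : H) → χ z = ψ y) := by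
  classical
  have hCA : C ≤ A := le_trans hC inf_le_left
  have hCB : C ≤ B := le_trans hC inf_le_right
  set D : Submodule ℝ H := B ⊓ Cᗮ with hDdef
  haveI : FiniteDimensional ℝ ↥D := Submodule.finiteDimensional_of_le (inf_le_left : D ≤ B)
  -- A is orthogonal to D
  have hAD : ∀ a ∈ A, ∀ d ∈ D, ⟪a, d⟫ = 0 := by
    intro a ha d hd
    have h1 : (a - (C.orthogonalProjectionOnto a : H)) ∈ A ⊓ Cᗮ :=
      ⟨A.sub_mem ha (hCA (C.orthogonalProjectionOnto a).2),
        Submodule.sub_starProjection_mem_orthogonal (K := C) a⟩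
    have h2 : ⟪(C.orthogonalProjectionOnto a : H), d⟫ = 0 :=
      hd.2 _ (C.orthogonalProjectionOnto a).2
    have h3 : ⟪a - (C.orthogonalProjectionOnto a : H), d⟫ = 0 := horth _ h1 d hd
    have : a = (C.orthogonalProjectionOnto a : H) + (a - (C.orthogonalProjectionOnto a : H)) := by abel
    rw [this, inner_add_left, h2, h3]; ring
  -- ψ restricted to C is surjective onto C
  have hψCsurj : ∀ c : H, c ∈ C → ∃ c' : ↥C,
      ψ (Submodule.inclusion hCB c') = c := by
    have hmem : ∀ c : ↥C, ψ (Submodule.inclusion hCB c) ∈ C := by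
      intro c
      exact hψC _ (by simpa using c.2)
    let ψC : ↥C →ₗ[ℝ] ↥C :=
      LinearMap.codRestrict C (ψ.toLinearMap ∘ₗ Submodule.inclusion hCB) hmem
    have hinj : Function.Injective ψC := by
      intro x y hxy
      have h1 : ψ (Submodule.inclusion hCB x) = ψ (Submodule.inclusion hCB y) := by
        have := congrArg (Subtype.val) hxy
        simpa [ψC] using this
      have h2 := ψ.injective h1
      have h3 := congrArg (Subtype.val) h2
      exact Subtype.ext (by simpa using h3)
    have hsurj : Function.Surjective ψC := (LinearMap.injective_iff_surjective).mp hinj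
    intro c hc
    obtain ⟨c', hc'⟩ := hsurj ⟨c, hc⟩
    exact ⟨c', by simpa [ψC] using congrArg Subtype.val hc'⟩
  -- ψ maps B ⊓ Cᗮ into Cᗮ
  have hψD : ∀ b : B, (b : H) ∈ Cᗮ → ψ b ∈ Cᗮ := by
    intro b hb
    rw [Submodule.mem_orthogonal]
    intro u hu
    obtain ⟨c', hc'⟩ := hψCsurj u hu
    rw [← hc', LinearIsometry.inner_map_map]
    have hmemC : ((Submodule.inclusion hCB c' : B) : H) ∈ C := by simpa using c'.2
    have : ⟪((Submodule.inclusion hCB c' : B) : H), ((b : B) : H)⟫ = 0 := by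
      rw [real_inner_comm]
      exact (Submodule.mem_orthogonal' C _).mp hb _ hmemC
    exact this
  -- the orthogonal projection onto D
  set P : H →L[ℝ] ↥D := D.orthogonalProjectionOnto with hPdef
  -- elements of D-orthogonal
  have hDperp_ofA : ∀ a ∈ A, a ∈ Dᗮ := by
    intro a ha
    rw [Submodule.mem_orthogonal]
    intro u hu
    rw [real_inner_comm]
    exact hAD a ha u hu
  have hDperp_ofC : ∀ c ∈ C, c ∈ Dᗮ :=
    fun c hc => hDperp_ofA c (hCA hc)
  -- for z in A ⊔ B, z - P z lands in A
  have hmemA : ∀ z : ↥(A ⊔ B), (z : H) - (P z : H) ∈ A := by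
    intro z
    obtain ⟨a, ha, b, hb, hab⟩ := Submodule.mem_sup.mp z.2
    set c : H := (C.orthogonalProjectionOnto b : H) with hcdef
    have hcC : c ∈ C := (C.orthogonalProjectionOnto b).2
    have hdD : b - c ∈ D := ⟨B.sub_mem hb (hCB hcC), Submodule.sub_starProjection_mem_orthogonal (K := C) b⟩
    have hz : (z : H) = a + c + (b - c) := by rw [← hab]; abel
    have hPz : (P z : H) = b - c := by
      rw [hz]
      have e1 : P (a + c + (b - c)) = P a + P c + P (b - c) := by
        simp [map_add]
      rw [e1]
      have e2 : P a = 0 := Submodule.orthogonalProjectionOnto_apply_of_mem_orthogonal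
        (hDperp_ofA a ha)
      have e3 : P c = 0 := Submodule.orthogonalProjectionOnto_apply_of_mem_orthogonal
        (hDperp_ofC c hcC)
      have e4 : (P (b - c) : H) = b - c := by
        rw [hPdef]
        exact congrArg Subtype.val
          (Submodule.orthogonalProjectionOnto_mem_subspace_eq_self (⟨b - c, hdD⟩ : ↥D))
      rw [e2, e3]
      simpa using e4
    rw [hPz, hz]
    have : a + c + (b - c) - (b - c) = a + c := by abel
    rw [this]
    exact A.add_mem ha (hCA hcC)
  -- the linear maps
  set πD : ↥(A ⊔ B) →ₗ[ℝ] ↥D := P.toLinearMap ∘ₗ (A ⊔ B).subtype with hπD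
  set πA : ↥(A ⊔ B) →ₗ[ℝ] ↥A :=
    LinearMap.codRestrict A ((A ⊔ B).subtype - D.subtype ∘ₗ πD) (fun z => hmemA z) with hπA
  set ι : ↥D →ₗ[ℝ] ↥B := Submodule.inclusion (inf_le_left : D ≤ B) with hι
  set f : ↥(A ⊔ B) →ₗ[ℝ] H :=
    φ.toLinearMap ∘ₗ πA + ψ.toLinearMap ∘ₗ ι ∘ₗ πD with hf
  have hfapp : ∀ z : ↥(A ⊔ B), f z = φ (πA z) + ψ (ι (πD z)) := fun z => rfl
  have hπAcoe : ∀ z : ↥(A ⊔ B), ((πA z : A) : H) = (z : H) - (P z : H) := by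
    intro z; simp [hπA, hπD]
  have hπDcoe : ∀ z : ↥(A ⊔ B), ((πD z : D) : H) = (P (z : H) : H) := by
    intro z; simp [hπD]
  have hιcoe : ∀ d : ↥D, ((ι d : B) : H) = (d : H) := by
    intro d; simp [hι]
  -- norm preservation
  have hnorm : ∀ z : ↥(A ⊔ B), ‖f z‖ = ‖(z : H)‖ := by
    intro z
    have hdec : (z : H) = ((πA z : A) : H) + ((πD z : D) : H) := by
      rw [hπAcoe, hπDcoe]; abel
    have hψι : ψ (ι (πD z)) ∈ D :=
      ⟨hψB _, hψD _ (by rw [hιcoe]; exact (πD z).2.2)⟩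
    have ho1 : ⟪((πA z : A) : H), ((πD z : D) : H)⟫ = 0 := hAD _ (πA z).2 _ (πD z).2
    have ho2 : ⟪(φ (πA z) : H), (ψ (ι (πD z)) : H)⟫ = 0 := hAD _ (hφA _) _ hψι
    have hn1 : ‖(φ (πA z) : H)‖ = ‖((πA z : A) : H)‖ := by
      rw [φ.norm_map]; simp
    have hn2 : ‖(ψ (ι (πD z)) : H)‖ = ‖((πD z : D) : H)‖ := by
      rw [ψ.norm_map]; simp [hιcoe]
    have hsq1 : ‖f z‖ ^ 2 = ‖(φ (πA z) : H)‖ ^ 2 + ‖(ψ (ι (πD z)) : H)‖ ^ 2 := by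
      rw [hfapp]
      rw [norm_add_sq_real, ho2]; ring
    have hsq2 : ‖(z : H)‖ ^ 2 = ‖((πA z : A) : H)‖ ^ 2 + ‖((πD z : D) : H)‖ ^ 2 := by
      rw [hdec, norm_add_sq_real, ho1]; ring
    have hsq : ‖f z‖ ^ 2 = ‖(z : H)‖ ^ 2 := by rw [hsq1, hsq2, hn1, hn2]
    have := congrArg Real.sqrt hsq
    rwa [Real.sqrt_sq (norm_nonneg _), Real.sqrt_sq (norm_nonneg _)] at this
  refine ⟨⟨f, hnorm⟩, ?_, ?_, ?_⟩
  · intro z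
    rw [show (⟨f, hnorm⟩ : ↥(A ⊔ B) →ₗᵢ[ℝ] H) z = f z from rfl, hfapp]
    exact Submodule.add_mem_sup (hφA _) (hψB _)
  · intro x z hxz
    rw [show (⟨f, hnorm⟩ : ↥(A ⊔ B) →ₗᵢ[ℝ] H) z = f z from rfl, hfapp]
    have hPz : P (z : H) = 0 := by
      apply Submodule.orthogonalProjectionOnto_apply_of_mem_orthogonal
      rw [← hxz]
      exact hDperp_ofA _ x.2
    have hπDz : πD z = 0 := by
      apply Subtype.ext
      rw [hπDcoe, hPz]
    have hπAz : πA z = x := by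
      apply Subtype.ext
      rw [hπAcoe, hPz, ← hxz]
      simp
    rw [hπDz, hπAz, map_zero, map_zero, add_zero]
  · intro y z hyz
    rw [show (⟨f, hnorm⟩ : ↥(A ⊔ B) →ₗᵢ[ℝ] H) z = f z from rfl, hfapp]
    set c : H := (C.orthogonalProjectionOnto (y : H) : H) with hcdef
    have hcC : c ∈ C := (C.orthogonalProjectionOnto (y : H)).2
    have hdD : (y : H) - c ∈ D :=
      ⟨B.sub_mem y.2 (hCB hcC), Submodule.sub_starProjection_mem_orthogonal (K := C) (y : H)⟩
    have hPz : (P (z : H) : H) = (y : H) - c := by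
      rw [← hyz]
      have hy : (y : H) = c + ((y : H) - c) := by abel
      rw [hy, map_add]
      have e3 : P c = 0 := Submodule.orthogonalProjectionOnto_apply_of_mem_orthogonal
        (hDperp_ofC c hcC)
      have e4 : (P ((y : H) - c) : H) = (y : H) - c := by
        rw [hPdef]
        exact congrArg Subtype.val
          (Submodule.orthogonalProjectionOnto_mem_subspace_eq_self (⟨(y : H) - c, hdD⟩ : ↥D))
      rw [e3]
      simpa using e4
    have hπAz : πA z = ⟨c, hCA hcC⟩ := by
      apply Subtype.ext
      rw [hπAcoe, hPz, ← hyz]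
      simp
    have hπDz : ι (πD z) = ⟨(y : H) - c, hdD.1⟩ := by
      apply Subtype.ext
      rw [hιcoe, hπDcoe, hPz]
    have hy2 : y = (⟨c, hCB hcC⟩ : B) + (⟨(y : H) - c, hdD.1⟩ : B) := by
      apply Subtype.ext; simp
    have hψy : ψ y = ψ ((⟨c, hCB hcC⟩ : B)) + ψ ((⟨(y : H) - c, hdD.1⟩ : B)) := by
      rw [← map_add]; exact congrArg ψ hy2
    have hag : φ (⟨c, hCA hcC⟩ : A) = ψ (⟨c, hCB hcC⟩ : B) := hagree _ _ rfl hcC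
    rw [hπAz, hπDz, hψy, hag]
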